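/- Let S : X → E be an admissible impact map and A ⊂ E an admissible acceptance set. Then the systemic acceptance set admits the representation S^{-1}(A) = ⋂_{Z ∈ X'} {X ∈ X : E[⟨X,Z⟩] ≥ α(Z)}. Moreover, if bar(A) ∩ E'_{++} ≠ ∅, then also S^{-1}(A) = ⋂_{Z ∈ X'} {X ∈ X : E[⟨X,Z⟩] ≥ α⁺(Z)}. -/

import Mathlib

open MeasureTheory Filter Set
open scoped ENNReal

noncomputable section

namespace SystemicRisk

variable {Ω : Type*} [MeasurableSpace Ω]

/-- A random variable is essentially bounded. -/
def EssBdd {μ : Measure Ω} (f : Ω →ₘ[μ] ℝ) : Prop :=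
  ∃ C : ℝ, ∀ᵐ ω ∂μ, |f ω| ≤ C

/-- The scalar pairing `E[U W]`. -/
def ip {μ : Measure Ω} (U W : Ω →ₘ[μ] ℝ) : ℝ := ∫ ω, U ω * W ω ∂μ

/-- The Köthe dual of a set of random variables. -/
def kdual {μ : Measure Ω} (L : Set (Ω →ₘ[μ] ℝ)) : Set (Ω →ₘ[μ] ℝ) :=
  {Z | ∀ f ∈ L, Integrable (fun ω => f ω * Z ω) μ}

/-- `nrm` is a Banach lattice norm on `L` (w.r.t. the a.s. order). -/
structure IsBLNorm {μ : Measure Ω} (L : Set (Ω →ₘ[μ] ℝ)) (nrm : (Ω →ₘ[μ] ℝ) → ℝ) : Prop where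
  nonneg : ∀ f ∈ L, 0 ≤ nrm f
  eq_zero_iff : ∀ f ∈ L, (nrm f = 0 ↔ f = 0)
  smul_eq : ∀ f ∈ L, ∀ c : ℝ, nrm (c • f) = |c| * nrm f
  triangle : ∀ f ∈ L, ∀ g ∈ L, nrm (f + g) ≤ nrm f + nrm g
  solid : ∀ f ∈ L, ∀ g ∈ L, |f| ≤ |g| → nrm f ≤ nrm g
  complete : ∀ u : ℕ → (Ω →ₘ[μ] ℝ), (∀ n, u n ∈ L) →
      (∀ ε : ℝ, 0 < ε → ∃ N : ℕ, ∀ m ≥ N, ∀ n ≥ N, nrm (u m - u n) < ε) →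
      ∃ f ∈ L, ∀ ε : ℝ, 0 < ε → ∃ N : ℕ, ∀ n ≥ N, nrm (u n - f) < ε

/-- `L` is an admissible space: a linear subspace of `L^0` which is a Banach lattice
(for the a.s. order, with norm `nrm`) satisfying `L^∞ ⊆ L ⊆ L^1`. -/
structure IsAdmissible {μ : Measure Ω} (L : Set (Ω →ₘ[μ] ℝ)) (nrm : (Ω →ₘ[μ] ℝ) → ℝ) : Prop where
  zero_mem : (0 : Ω →ₘ[μ] ℝ) ∈ L
  add_mem : ∀ f ∈ L, ∀ g ∈ L, f + g ∈ L
  smul_mem : ∀ (c : ℝ), ∀ f ∈ L, c • f ∈ L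
  sup_mem : ∀ f ∈ L, ∀ g ∈ L, f ⊔ g ∈ L
  inf_mem : ∀ f ∈ L, ∀ g ∈ L, f ⊓ g ∈ L
  linfty_subset : ∀ f, EssBdd f → f ∈ L
  subset_lone : ∀ f ∈ L, Integrable f μ
  banach : IsBLNorm L nrm

variable {d : ℕ}

/-- The product space `X = X_1 × ⋯ × X_d`. -/
def prodSet {μ : Measure Ω} (Li : Fin d → Set (Ω →ₘ[μ] ℝ)) : Set (Fin d → (Ω →ₘ[μ] ℝ)) :=
  {X | ∀ i, X i ∈ Li i}

/-- The vector pairing `E[⟨X,Z⟩] = ∑ i, E[X_i Z_i]`. -/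
def pairing {μ : Measure Ω} (X Z : Fin d → (Ω →ₘ[μ] ℝ)) : ℝ := ∑ i, ip (X i) (Z i)

/-- The constant random vector associated with `m ∈ ℝ^d`. -/
def cvec (μ : Measure Ω) (m : Fin d → ℝ) : Fin d → (Ω →ₘ[μ] ℝ) :=
  fun i => (AEEqFun.const Ω (m i) : Ω →ₘ[μ] ℝ)

/-- The weak topology `σ(P, D)` on a set of random vectors `P` induced by the pairing
with elements of `D`. -/
def wtop {μ : Measure Ω} (P D : Set (Fin d → (Ω →ₘ[μ] ℝ))) : TopologicalSpace ↥P :=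
  TopologicalSpace.induced
    (fun X : ↥P => fun Z : ↥D => pairing (X : Fin d → (Ω →ₘ[μ] ℝ)) (Z : Fin d → (Ω →ₘ[μ] ℝ)))
    Pi.topologicalSpace

/-- The weak topology `σ(P, D)` on a set of random variables `P` induced by the pairing
with elements of `D`. -/
def wtop1 {μ : Measure Ω} (P D : Set (Ω →ₘ[μ] ℝ)) : TopologicalSpace ↥P :=
  TopologicalSpace.induced
    (fun U : ↥P => fun W : ↥D => ip (U : Ω →ₘ[μ] ℝ) (W : Ω →ₘ[μ] ℝ))
    Pi.topologicalSpace

/-- An admissible impact map `S : X → E`. -/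
structure IsAdmissibleImpact {μ : Measure Ω} (XX XX' : Set (Fin d → (Ω →ₘ[μ] ℝ)))
    (EE EE' : Set (Ω →ₘ[μ] ℝ)) (S : (Fin d → (Ω →ₘ[μ] ℝ)) → (Ω →ₘ[μ] ℝ)) : Prop where
  mapsTo : ∀ X ∈ XX, S X ∈ EE
  nonconst : ∃ X ∈ XX, ∃ Y ∈ XX, S X ≠ S Y
  normalized : S 0 = 0
  mono : ∀ X ∈ XX, ∀ Y ∈ XX, X ≤ Y → S X ≤ S Y
  concave : ∀ X ∈ XX, ∀ Y ∈ XX, ∀ t : ℝ, 0 ≤ t → t ≤ 1 →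
      t • S X + (1 - t) • S Y ≤ S (t • X + (1 - t) • Y)
  usc : ∀ W ∈ EE', (0 : Ω →ₘ[μ] ℝ) ≤ W →
      @UpperSemicontinuous (↥XX) ℝ (wtop XX XX') _
        (fun X : ↥XX => ∫ ω, S (X : Fin d → (Ω →ₘ[μ] ℝ)) ω * W ω ∂μ)

/-- An admissible acceptance set `A ⊆ E` (relative to the impact map `S`). -/
structure IsAdmissibleAcceptance {μ : Measure Ω} (XX : Set (Fin d → (Ω →ₘ[μ] ℝ)))
    (EE EE' : Set (Ω →ₘ[μ] ℝ)) (S : (Fin d → (Ω →ₘ[μ] ℝ)) → (Ω →ₘ[μ] ℝ))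
    (A : Set (Ω →ₘ[μ] ℝ)) : Prop where
  subset : A ⊆ EE
  preimage_nonempty : ∃ X ∈ XX, S X ∈ A
  preimage_proper : ∃ X ∈ XX, S X ∉ A
  zero_mem : (0 : Ω →ₘ[μ] ℝ) ∈ A
  mono : ∀ U ∈ A, ∀ V ∈ EE, (0 : Ω →ₘ[μ] ℝ) ≤ V → U + V ∈ A
  convex : ∀ U ∈ A, ∀ V ∈ A, ∀ t : ℝ, 0 ≤ t → t ≤ 1 → t • U + (1 - t) • V ∈ A
  closed : @IsClosed (↥EE) (wtop1 EE EE') {U : ↥EE | (U : Ω →ₘ[μ] ℝ) ∈ A}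

/-- The systemic acceptance set `S⁻¹(A) = {X ∈ X : S(X) ∈ A}`. -/
def sysAcc {μ : Measure Ω} (XX : Set (Fin d → (Ω →ₘ[μ] ℝ)))
    (S : (Fin d → (Ω →ₘ[μ] ℝ)) → (Ω →ₘ[μ] ℝ)) (A : Set (Ω →ₘ[μ] ℝ)) :
    Set (Fin d → (Ω →ₘ[μ] ℝ)) :=
  {X ∈ XX | S X ∈ A}

/-- The "first allocate, then aggregate" systemic risk measure `ρ`. -/
def rho (μ : Measure Ω) (S : (Fin d → (Ω →ₘ[μ] ℝ)) → (Ω →ₘ[μ] ℝ)) (A : Set (Ω →ₘ[μ] ℝ))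
    (X : Fin d → (Ω →ₘ[μ] ℝ)) : EReal :=
  ⨅ m ∈ {m : Fin d → ℝ | S (X + cvec μ m) ∈ A}, ((∑ i, m i : ℝ) : EReal)

/-- The (lower) support function of a set of random vectors. -/
def suppV {μ : Measure Ω} (B : Set (Fin d → (Ω →ₘ[μ] ℝ))) (Z : Fin d → (Ω →ₘ[μ] ℝ)) : EReal :=
  ⨅ X ∈ B, ((pairing X Z : ℝ) : EReal)

/-- The barrier cone of a set of random vectors, inside the dual set `D`. -/
def barrV {μ : Measure Ω} (B D : Set (Fin d → (Ω →ₘ[μ] ℝ))) : Set (Fin d → (Ω →ₘ[μ] ℝ)) :=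
  {Z ∈ D | ⊥ < suppV B Z}

/-- The (lower) support function of a set of random variables. -/
def suppS {μ : Measure Ω} (A : Set (Ω →ₘ[μ] ℝ)) (W : Ω →ₘ[μ] ℝ) : EReal :=
  ⨅ U ∈ A, ((ip U W : ℝ) : EReal)

/-- The barrier cone of a set of random variables, inside the dual set `D`. -/
def barrS {μ : Measure Ω} (A D : Set (Ω →ₘ[μ] ℝ)) : Set (Ω →ₘ[μ] ℝ) :=
  {W ∈ D | ⊥ < suppS A W}

/-- The generic penalty function with dual variables `W` ranging over `K`. -/
def penalty {μ : Measure Ω} (XX : Set (Fin d → (Ω →ₘ[μ] ℝ)))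
    (A : Set (Ω →ₘ[μ] ℝ)) (S : (Fin d → (Ω →ₘ[μ] ℝ)) → (Ω →ₘ[μ] ℝ))
    (K : Set (Ω →ₘ[μ] ℝ)) (Z : Fin d → (Ω →ₘ[μ] ℝ)) : EReal :=
  ⨆ W ∈ K, (suppS A W +
    ⨅ X ∈ XX, ((pairing X Z - ∫ ω, S X ω * W ω ∂μ : ℝ) : EReal))

/-- a.s. strictly positive random variables. -/
def strictPos (μ : Measure Ω) : Set (Ω →ₘ[μ] ℝ) := {W | ∀ᵐ ω ∂μ, 0 < W ω}

/-- The penalty function `α`. -/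
def alpha {μ : Measure Ω} (XX : Set (Fin d → (Ω →ₘ[μ] ℝ))) (EE' : Set (Ω →ₘ[μ] ℝ))
    (A : Set (Ω →ₘ[μ] ℝ)) (S : (Fin d → (Ω →ₘ[μ] ℝ)) → (Ω →ₘ[μ] ℝ)) :
    (Fin d → (Ω →ₘ[μ] ℝ)) → EReal :=
  penalty XX A S (barrS A EE')

/-- The penalty function `α⁺`. -/
def alphaPlus {μ : Measure Ω} (XX : Set (Fin d → (Ω →ₘ[μ] ℝ))) (EE' : Set (Ω →ₘ[μ] ℝ))
    (A : Set (Ω →ₘ[μ] ℝ)) (S : (Fin d → (Ω →ₘ[μ] ℝ)) → (Ω →ₘ[μ] ℝ)) :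
    (Fin d → (Ω →ₘ[μ] ℝ)) → EReal :=
  penalty XX A S (barrS A EE' ∩ (strictPos μ ∪ {0}))

/-- a.s. strictly positive random vectors. -/
def strictPosV (μ : Measure Ω) (d : ℕ) : Set (Fin d → (Ω →ₘ[μ] ℝ)) :=
  {Z | ∀ i, ∀ᵐ ω ∂μ, 0 < Z i ω}

/-- The set `C` of nonnegative dual vectors with all components of expectation one. -/
def Cset {μ : Measure Ω} (XX' : Set (Fin d → (Ω →ₘ[μ] ℝ))) : Set (Fin d → (Ω →ₘ[μ] ℝ)) :=
  {Z ∈ XX' | (∀ i, (0 : Ω →ₘ[μ] ℝ) ≤ Z i) ∧ ∀ i, (∫ ω, Z i ω ∂μ) = 1}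

/-- A map with values in `[−∞,∞]` is proper on `P` if it never attains `−∞` on `P`
and is finite somewhere on `P`. -/
def ProperOn {β : Type*} (P : Set β) (f : β → EReal) : Prop :=
  (∀ x ∈ P, f x ≠ ⊥) ∧ ∃ x ∈ P, f x ≠ ⊤

/-- The positive part of an extended real number, as an extended nonnegative real. -/
def epos (x : EReal) : ℝ≥0∞ := if x = ⊤ then ⊤ else ENNReal.ofReal x.toReal

/-- The integral of an extended-real-valued function. -/
def eintegral (μ : Measure Ω) (g : Ω → EReal) : EReal :=
  ((∫⁻ ω, epos (g ω) ∂μ : ℝ≥0∞) : EReal) - ((∫⁻ ω, epos (-(g ω)) ∂μ : ℝ≥0∞) : EReal)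


section WeakSep
lemma span_continuous {V : Type*} [AddCommGroup V] [Module ℝ V] {ι : Type*}
    (p : ι → V →ₗ[ℝ] ℝ) (g : V →ₗ[ℝ] ℝ) (hg : g ∈ Submodule.span ℝ (Set.range p)) :
    @Continuous V ℝ (TopologicalSpace.induced (fun v (i : ι) => p i v) Pi.topologicalSpace) _ g := by
  letI τ : TopologicalSpace V := TopologicalSpace.induced (fun v (i : ι) => p i v)
    Pi.topologicalSpace
  have hΦ : Continuous fun v : V => fun i : ι => p i v := continuous_induced_dom
  refine Submodule.span_induction ?_ ?_ ?_ ?_ hg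
  · rintro g ⟨i, rfl⟩
    exact (continuous_apply i).comp hΦ
  · exact (continuous_const : Continuous fun _ : V => (0:ℝ))
  · intro g h _ _ hgc hhc
    exact (hgc.add hhc : Continuous fun v => g v + h v)
  · intro c g _ hgc
    exact (hgc.const_smul c : Continuous fun v => c • g v)

lemma weak_sep {V : Type*} [AddCommGroup V] [Module ℝ V] {ι : Type*}
    (p : ι → V →ₗ[ℝ] ℝ) {C : Set V} (hC : Convex ℝ C)
    (t : TopologicalSpace V)
    (ht : TopologicalSpace.induced (fun v (i : ι) => p i v) Pi.topologicalSpace ≤ t)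
    (hcl : @IsClosed V t C)
    {x₀ : V} (hx₀ : x₀ ∉ C) :
    ∃ g ∈ Submodule.span ℝ (Set.range p), ∃ r : ℝ, g x₀ < r ∧ ∀ y ∈ C, r < g y := by
  classical
  set F : Submodule ℝ (V →ₗ[ℝ] ℝ) := Submodule.span ℝ (Set.range p) with hF
  let B : V →ₗ[ℝ] (↥F →ₗ[ℝ] ℝ) :=
    { toFun := fun v =>
        { toFun := fun g => g.1 v
          map_add' := fun g h => rfl
          map_smul' := fun c g => rfl }
      map_add' := fun v w => by ext g; exact g.1.map_add v w
      map_smul' := fun c v => by ext g; exact g.1.map_smul c v }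
  letI τ : TopologicalSpace V := TopologicalSpace.induced (fun v (i : ι) => p i v)
    Pi.topologicalSpace
  have hτ : (WeakBilin.instTopologicalSpace B : TopologicalSpace (WeakBilin B)) = τ := by
    have h1 : (WeakBilin.instTopologicalSpace B : TopologicalSpace (WeakBilin B)) =
        ⨅ g : ↥F, TopologicalSpace.induced (fun v : V => B v g) inferInstance := by
      show TopologicalSpace.induced (fun (v : V) (g : ↥F) => B v g) Pi.topologicalSpace = _
      rw [Pi.topologicalSpace, induced_iInf]
      exact iInf_congr fun g => (induced_compose)
    have h2 : τ = ⨅ i : ι, TopologicalSpace.induced (fun v : V => p i v) inferInstance := by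
      show TopologicalSpace.induced (fun v (i : ι) => p i v) Pi.topologicalSpace = _
      rw [Pi.topologicalSpace, induced_iInf]
      exact iInf_congr fun i => (induced_compose)
    rw [h1, h2]
    apply le_antisymm
    · refine le_iInf fun i => ?_
      exact iInf_le_of_le ⟨p i, Submodule.subset_span ⟨i, rfl⟩⟩ le_rfl
    · refine le_iInf fun g => ?_
      rw [← h2]
      exact continuous_iff_le_induced.mp (span_continuous p g.1 g.2)
  -- transport instances along hτ
  letI : TopologicalSpace V := τ
  haveI hTAG : @IsTopologicalAddGroup V τ _ := by
    rw [← hτ]; exact WeakBilin.instIsTopologicalAddGroup (𝕜 := ℝ) (E := V) (F := ↥F) B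
  haveI hCSM : @ContinuousSMul ℝ V _ _ τ := by
    rw [← hτ]; exact WeakBilin.instContinuousSMul B
  haveI hLCS : @LocallyConvexSpace ℝ V _ _ _ _ τ := by
    rw [← hτ]; exact WeakBilin.locallyConvexSpace (𝕜 := ℝ) (E := V) (F := ↥F) (B := B)
  have hclτ : @IsClosed V τ C := by
    rw [show τ = TopologicalSpace.induced (fun v (i : ι) => p i v) Pi.topologicalSpace from rfl]
      at *
    exact hcl.mono ht
  obtain ⟨f, u, hfx, hfb⟩ := geometric_hahn_banach_point_closed hC hclτ hx₀
  -- f is continuous for τ, hence lies in the span F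
  have h0m : (0:V) ∈ ⇑f ⁻¹' Set.Ioo (-1:ℝ) 1 := by simp [map_zero]
  have hnb2 : (⇑f ⁻¹' Set.Ioo (-1:ℝ) 1) ∈
      @nhds V (TopologicalSpace.induced (fun v (i : ι) => p i v) Pi.topologicalSpace) 0 :=
    (((isOpen_Ioo : IsOpen (Set.Ioo (-1:ℝ) 1)).preimage f.continuous).mem_nhds h0m :
      (⇑f ⁻¹' Set.Ioo (-1:ℝ) 1) ∈ @nhds V τ 0)
  rw [nhds_induced, nhds_pi] at hnb2
  obtain ⟨S, hS, hsub⟩ := hnb2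
  rw [Filter.mem_pi] at hS
  obtain ⟨I, hIfin, tt, htt, hpi⟩ := hS
  have hker : ∀ v : V, (∀ i ∈ I, p i v = 0) → f v = 0 := by
    intro v hv
    by_contra hne
    have hall : ∀ n : ℝ, |f (n • v)| < 1 := by
      intro n
      have hmem : (n • v) ∈ ⇑f ⁻¹' Set.Ioo (-1:ℝ) 1 := by
        apply hsub
        apply hpi
        intro i hi
        have heq : p i (n • v) = p i (0:V) := by simp [_root_.map_smul, hv i hi]
        show p i (n • v) ∈ tt i
        rw [heq]
        exact mem_of_mem_nhds (htt i)
      simp only [Set.mem_preimage, Set.mem_Ioo] at hmem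
      rw [abs_lt]; exact hmem
    have h2 := hall (2 / f v)
    rw [_root_.map_smul] at h2
    simp only [smul_eq_mul] at h2
    rw [div_mul_cancel₀ (2:ℝ) hne] at h2
    norm_num at h2
  haveI : Finite ↥I := hIfin.to_subtype
  have hsp : (f.toLinearMap : V →ₗ[ℝ] ℝ) ∈
      Submodule.span ℝ (Set.range fun i : ↥I => p i.1) := by
    apply mem_span_of_iInf_ker_le_ker (𝕜 := ℝ)
    intro v hv
    rw [LinearMap.mem_ker]
    apply hker
    intro i hi
    have hmem := (Submodule.mem_iInf _).1 hv ⟨i, hi⟩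
    exact LinearMap.mem_ker.1 hmem
  refine ⟨f.toLinearMap, ?_, u, hfx, hfb⟩
  refine Submodule.span_mono ?_ hsp
  rintro g ⟨i, rfl⟩
  exact ⟨i.1, rfl⟩

end WeakSep
variable {μ : Measure Ω}

lemma ip_congr_fun {U W : Ω →ₘ[μ] ℝ} {g : Ω → ℝ} (h : (fun ω => U ω * W ω) =ᵐ[μ] g) :
    ip U W = ∫ ω, g ω ∂μ := integral_congr_ae h

lemma ip_zero_left (W : Ω →ₘ[μ] ℝ) : ip (0 : Ω →ₘ[μ] ℝ) W = 0 := by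
  rw [show ip (0 : Ω →ₘ[μ] ℝ) W = ∫ ω, (0:ℝ) ∂μ from
    integral_congr_ae (((AEEqFun.coeFn_zero : ⇑(0 : Ω →ₘ[μ] ℝ) =ᵐ[μ] 0)).mono fun ω h => by simp [h])]
  simp

lemma ip_zero_right (U : Ω →ₘ[μ] ℝ) : ip U (0 : Ω →ₘ[μ] ℝ) = 0 := by
  rw [show ip U (0 : Ω →ₘ[μ] ℝ) = ∫ ω, (0:ℝ) ∂μ from
    integral_congr_ae (((AEEqFun.coeFn_zero : ⇑(0 : Ω →ₘ[μ] ℝ) =ᵐ[μ] 0)).mono fun ω h => by simp [h])]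
  simp

lemma ip_add_left {U V W : Ω →ₘ[μ] ℝ} (hU : Integrable (fun ω => U ω * W ω) μ)
    (hV : Integrable (fun ω => V ω * W ω) μ) :
    ip (U + V) W = ip U W + ip V W := by
  rw [show ip (U + V) W = ∫ ω, (U ω * W ω + V ω * W ω) ∂μ from
    integral_congr_ae ((AEEqFun.coeFn_add U V).mono fun ω h => by
      simp only [h, Pi.add_apply]; ring)]
  exact integral_add hU hV

lemma ip_smul_left (c : ℝ) (U W : Ω →ₘ[μ] ℝ) : ip (c • U) W = c * ip U W := by
  rw [show ip (c • U) W = ∫ ω, c * (U ω * W ω) ∂μ from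
    integral_congr_ae ((AEEqFun.coeFn_smul c U).mono fun ω h => by
      simp only [h, Pi.smul_apply, smul_eq_mul]; ring)]
  exact integral_const_mul c _

lemma ip_add_right {U W₁ W₂ : Ω →ₘ[μ] ℝ} (h1 : Integrable (fun ω => U ω * W₁ ω) μ)
    (h2 : Integrable (fun ω => U ω * W₂ ω) μ) :
    ip U (W₁ + W₂) = ip U W₁ + ip U W₂ := by
  rw [show ip U (W₁ + W₂) = ∫ ω, (U ω * W₁ ω + U ω * W₂ ω) ∂μ from
    integral_congr_ae ((AEEqFun.coeFn_add W₁ W₂).mono fun ω h => by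
      simp only [h, Pi.add_apply]; ring)]
  exact integral_add h1 h2

lemma ip_smul_right (c : ℝ) (U W : Ω →ₘ[μ] ℝ) : ip U (c • W) = c * ip U W := by
  rw [show ip U (c • W) = ∫ ω, c * (U ω * W ω) ∂μ from
    integral_congr_ae ((AEEqFun.coeFn_smul c W).mono fun ω h => by
      simp only [h, Pi.smul_apply, smul_eq_mul]; ring)]
  exact integral_const_mul c _

lemma ip_mono_left {U V W : Ω →ₘ[μ] ℝ} (hUV : U ≤ V) (hW : (0 : Ω →ₘ[μ] ℝ) ≤ W)
    (hU : Integrable (fun ω => U ω * W ω) μ) (hV : Integrable (fun ω => V ω * W ω) μ) :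
    ip U W ≤ ip V W := by
  apply integral_mono_ae hU hV
  have h1 : (U : Ω → ℝ) ≤ᵐ[μ] V := AEEqFun.coeFn_le.2 hUV
  have h2 : (0:Ω →ₘ[μ] ℝ) ≤ᵐ[μ] (W : Ω → ℝ) := AEEqFun.coeFn_le.2 hW
  have h3 : ⇑(0 : Ω →ₘ[μ] ℝ) =ᵐ[μ] 0 := AEEqFun.coeFn_zero
  filter_upwards [h1, h2, h3] with ω hω hω2 hω3
  have h0 : (0:ℝ) ≤ W ω := by
    have := hω2; rw [hω3] at this; exact this
  exact mul_le_mul_of_nonneg_right hω h0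

/-- combination in the left argument -/
lemma ip_combo_left {U V W : Ω →ₘ[μ] ℝ} (a b : ℝ)
    (hU : Integrable (fun ω => U ω * W ω) μ) (hV : Integrable (fun ω => V ω * W ω) μ) :
    ip (a • U + b • V) W = a * ip U W + b * ip V W := by
  rw [ip_add_left ((hU.const_mul a).congr ?_) ((hV.const_mul b).congr ?_),
    ip_smul_left, ip_smul_left]
  · filter_upwards [AEEqFun.coeFn_smul a U] with ω h
    simp only [h, Pi.smul_apply, smul_eq_mul]; ring
  · filter_upwards [AEEqFun.coeFn_smul b V] with ω h
    simp only [h, Pi.smul_apply, smul_eq_mul]; ring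

lemma ip_combo_right {U W₁ W₂ : Ω →ₘ[μ] ℝ} (a b : ℝ)
    (h1 : Integrable (fun ω => U ω * W₁ ω) μ) (h2 : Integrable (fun ω => U ω * W₂ ω) μ) :
    ip U (a • W₁ + b • W₂) = a * ip U W₁ + b * ip U W₂ := by
  rw [ip_add_right ((h1.const_mul a).congr ?_) ((h2.const_mul b).congr ?_),
    ip_smul_right, ip_smul_right]
  · filter_upwards [AEEqFun.coeFn_smul a W₁] with ω h
    simp only [h, Pi.smul_apply, smul_eq_mul]; ring
  · filter_upwards [AEEqFun.coeFn_smul b W₂] with ω h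
    simp only [h, Pi.smul_apply, smul_eq_mul]; ring


/-- A set closed under the module operations, as a submodule. -/
def setSub {M : Type*} [AddCommGroup M] [Module ℝ M] (L : Set M) (h0 : (0:M) ∈ L)
    (hadd : ∀ f ∈ L, ∀ g ∈ L, f + g ∈ L) (hsmul : ∀ c : ℝ, ∀ f ∈ L, c • f ∈ L) :
    Submodule ℝ M where
  carrier := L
  zero_mem' := h0
  add_mem' := fun hf hg => hadd _ hf _ hg
  smul_mem' := fun c f hf => hsmul c _ hf

variable {μ : Measure Ω}

lemma kdual_zero_mem (L : Set (Ω →ₘ[μ] ℝ)) : (0 : Ω →ₘ[μ] ℝ) ∈ kdual L := by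
  intro f hf
  refine (integrable_zero _ _ _).congr ?_
  filter_upwards [(AEEqFun.coeFn_zero : ⇑(0 : Ω →ₘ[μ] ℝ) =ᵐ[μ] 0)] with ω h
  simp [h]

lemma kdual_add_mem {L : Set (Ω →ₘ[μ] ℝ)} {Z₁ Z₂ : Ω →ₘ[μ] ℝ} (h1 : Z₁ ∈ kdual L)
    (h2 : Z₂ ∈ kdual L) : Z₁ + Z₂ ∈ kdual L := by
  intro f hf
  refine ((h1 f hf).add (h2 f hf)).congr ?_
  filter_upwards [AEEqFun.coeFn_add Z₁ Z₂] with ω h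
  simp only [h, Pi.add_apply]; ring

lemma kdual_smul_mem {L : Set (Ω →ₘ[μ] ℝ)} (c : ℝ) {Z : Ω →ₘ[μ] ℝ} (h : Z ∈ kdual L) :
    c • Z ∈ kdual L := by
  intro f hf
  refine ((h f hf).const_mul c).congr ?_
  filter_upwards [AEEqFun.coeFn_smul c Z] with ω h
  simp only [h, Pi.smul_apply, smul_eq_mul]; ring

/-- The Köthe dual as a submodule. -/
def kdualSub (L : Set (Ω →ₘ[μ] ℝ)) : Submodule ℝ (Ω →ₘ[μ] ℝ) :=
  setSub (kdual L) (kdual_zero_mem L) (fun _ h1 _ h2 => kdual_add_mem h1 h2)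
    (fun c _ h => kdual_smul_mem c h)

/-- An admissible space as a submodule. -/
def admSub {L : Set (Ω →ₘ[μ] ℝ)} {nrm : (Ω →ₘ[μ] ℝ) → ℝ} (hL : IsAdmissible L nrm) :
    Submodule ℝ (Ω →ₘ[μ] ℝ) :=
  setSub L hL.zero_mem (fun f hf g hg => hL.add_mem f hf g hg) (fun c f hf => hL.smul_mem c f hf)

section SepE
variable {μ : Measure Ω}

lemma sepE {EE : Set (Ω →ₘ[μ] ℝ)} {nrmE : (Ω →ₘ[μ] ℝ) → ℝ} (hE : IsAdmissible EE nrmE)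
    {A : Set (Ω →ₘ[μ] ℝ)} (hsub : A ⊆ EE)
    (hconv : ∀ U ∈ A, ∀ V ∈ A, ∀ t : ℝ, 0 ≤ t → t ≤ 1 → t • U + (1 - t) • V ∈ A)
    (hclosed : @IsClosed (↥EE) (wtop1 EE (kdual EE)) {U : ↥EE | (U : Ω →ₘ[μ] ℝ) ∈ A})
    {U₀ : Ω →ₘ[μ] ℝ} (hU₀E : U₀ ∈ EE) (hU₀ : U₀ ∉ A) :
    ∃ W ∈ kdual EE, ∃ u : ℝ, ip U₀ W < u ∧ ∀ U ∈ A, u < ip U W := by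
  classical
  letI : AddCommGroup ↥EE := inferInstanceAs (AddCommGroup ↥(admSub hE))
  letI : Module ℝ ↥EE := inferInstanceAs (Module ℝ ↥(admSub hE))
  letI : AddCommGroup ↥(kdual EE) := inferInstanceAs (AddCommGroup ↥(kdualSub EE))
  letI : Module ℝ ↥(kdual EE) := inferInstanceAs (Module ℝ ↥(kdualSub EE))
  let p : ↥(kdual EE) → (↥EE →ₗ[ℝ] ℝ) := fun W =>
    { toFun := fun U => ip (U : Ω →ₘ[μ] ℝ) (W : Ω →ₘ[μ] ℝ)
      map_add' := fun U V => ip_add_left (W.2 _ U.2) (W.2 _ V.2)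
      map_smul' := fun c U => ip_smul_left c _ _ }
  set C : Set ↥EE := {U : ↥EE | (U : Ω →ₘ[μ] ℝ) ∈ A} with hC
  have hCconv : Convex ℝ C := by
    intro x hx y hy a b ha hb hab
    have hb' : b = 1 - a := by linarith
    have := hconv _ hx _ hy a ha (by linarith)
    show (a • (x : Ω →ₘ[μ] ℝ) + b • (y : Ω →ₘ[μ] ℝ)) ∈ A
    rw [hb']; exact this
  have hx₀ : (⟨U₀, hU₀E⟩ : ↥EE) ∉ C := hU₀
  obtain ⟨g, hg, r, hgx, hgy⟩ := weak_sep p hCconv (wtop1 EE (kdual EE)) (le_of_eq rfl)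
    hclosed hx₀
  -- identify g with pairing against an element of the dual
  let Φ : ↥(kdual EE) →ₗ[ℝ] (↥EE →ₗ[ℝ] ℝ) :=
    { toFun := p
      map_add' := fun W W' => by
        ext U
        exact ip_add_right (W.2 _ U.2) (W'.2 _ U.2)
      map_smul' := fun c W => by
        ext U
        exact ip_smul_right c _ _ }
  have hrange : Submodule.span ℝ (Set.range p) ≤ LinearMap.range Φ := by
    rw [Submodule.span_le]
    rintro _ ⟨W, rfl⟩
    exact ⟨W, rfl⟩
  obtain ⟨W, hW⟩ := hrange hg
  refine ⟨(W : Ω →ₘ[μ] ℝ), W.2, r, ?_, ?_⟩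
  · have : g ⟨U₀, hU₀E⟩ = ip U₀ (W : Ω →ₘ[μ] ℝ) := by rw [← hW]; rfl
    rwa [this] at hgx
  · intro U hU
    have := hgy ⟨U, hsub hU⟩ hU
    rwa [show g ⟨U, hsub hU⟩ = ip U (W : Ω →ₘ[μ] ℝ) by rw [← hW]; rfl] at this

end SepE

section Nonneg
variable {μ : Measure Ω} [IsProbabilityMeasure μ]

/-- If `U ↦ ip U W` is bounded below on `A`, then `W ≥ 0` a.s. -/
lemma W_nonneg {EE : Set (Ω →ₘ[μ] ℝ)} {nrmE : (Ω →ₘ[μ] ℝ) → ℝ} (hE : IsAdmissible EE nrmE)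
    {A : Set (Ω →ₘ[μ] ℝ)} (h0A : (0 : Ω →ₘ[μ] ℝ) ∈ A)
    (hmono : ∀ U ∈ A, ∀ V ∈ EE, (0 : Ω →ₘ[μ] ℝ) ≤ V → U + V ∈ A)
    {W : Ω →ₘ[μ] ℝ} (hWd : W ∈ kdual EE) {u : ℝ} (hu : ∀ U ∈ A, u ≤ ip U W) :
    (0 : Ω →ₘ[μ] ℝ) ≤ W := by
  classical
  -- step 1: pairing with any nonneg element of EE is nonneg
  have hpos : ∀ V ∈ EE, (0 : Ω →ₘ[μ] ℝ) ≤ V → 0 ≤ ip V W := by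
    intro V hV hV0
    by_contra hneg
    push_neg at hneg
    set t : ℝ := (|u| + 1) / (-(ip V W)) with hts
    have hlt : (0:ℝ) < -(ip V W) := by linarith
    have htpos : 0 < t := div_pos (by positivity) hlt
    have htV : (0 : Ω →ₘ[μ] ℝ) ≤ t • V := by
      rw [← AEEqFun.coeFn_le]
      filter_upwards [AEEqFun.coeFn_smul t V, AEEqFun.coeFn_le.2 hV0,
        (AEEqFun.coeFn_zero : ⇑(0 : Ω →ₘ[μ] ℝ) =ᵐ[μ] 0)] with ω h1 h2 h3
      rw [h1, h3]
      rw [h3] at h2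
      simpa using mul_nonneg htpos.le (by simpa using h2)
    have hmem : (0 : Ω →ₘ[μ] ℝ) + t • V ∈ A :=
      hmono 0 h0A (t • V) (hE.smul_mem t V hV) htV
    have := hu _ hmem
    rw [show (0 : Ω →ₘ[μ] ℝ) + t • V = t • V from zero_add _, ip_smul_left] at this
    have ht' : t * ip V W = -(|u| + 1) := by
      rw [hts, div_mul_eq_mul_div, div_eq_iff (by linarith : -ip V W ≠ 0)]
      ring
    rw [ht'] at this
    have : u ≤ -(|u| + 1) := this
    have habs := neg_abs_le u
    linarith
  -- step 2: indicator of the negativity set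
  obtain ⟨g, hgmeas, hWg⟩ := W.aemeasurable
  set s : Set Ω := {ω | g ω < 0} with hs
  have hsm : MeasurableSet s := measurableSet_lt hgmeas measurable_const
  set V : Ω →ₘ[μ] ℝ := AEEqFun.mk (s.indicator fun _ => (1:ℝ))
    ((measurable_const.indicator hsm).aestronglyMeasurable) with hV
  have hVco : ⇑V =ᵐ[μ] s.indicator fun _ => (1:ℝ) := AEEqFun.coeFn_mk _ _
  have hVE : V ∈ EE := by
    apply hE.linfty_subset
    refine ⟨1, ?_⟩
    filter_upwards [hVco] with ω h
    rw [h]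
    by_cases hω : ω ∈ s <;> simp [Set.indicator_of_mem, Set.indicator_of_notMem, hω]
  have hV0 : (0 : Ω →ₘ[μ] ℝ) ≤ V := by
    rw [← AEEqFun.coeFn_le]
    filter_upwards [hVco, (AEEqFun.coeFn_zero : ⇑(0 : Ω →ₘ[μ] ℝ) =ᵐ[μ] 0)] with ω h h0
    rw [h, h0]
    by_cases hω : ω ∈ s <;> simp [Set.indicator_of_mem, Set.indicator_of_notMem, hω]
  have hipV : 0 ≤ ip V W := hpos V hVE hV0
  have hint : Integrable (fun ω => V ω * W ω) μ := hWd V hVE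
  have hieq : ip V W = ∫ ω, s.indicator g ω ∂μ := by
    apply integral_congr_ae
    filter_upwards [hVco, hWg] with ω h1 h2
    rw [h1, h2]
    by_cases hω : ω ∈ s <;>
      simp [Set.indicator_of_mem, Set.indicator_of_notMem, hω]
  have hint2 : Integrable (s.indicator g) μ := by
    refine hint.congr ?_
    filter_upwards [hVco, hWg] with ω h1 h2
    rw [h1, h2]
    by_cases hω : ω ∈ s <;>
      simp [Set.indicator_of_mem, Set.indicator_of_notMem, hω]
  -- the indicator integral is nonpositive since g < 0 on s
  have hnonpos : ∀ ω, s.indicator g ω ≤ 0 := by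
    intro ω
    by_cases hω : ω ∈ s
    · rw [Set.indicator_of_mem hω]
      exact le_of_lt hω
    · rw [Set.indicator_of_notMem hω]
  have hzero : (fun ω => -(s.indicator g ω)) =ᵐ[μ] 0 := by
    rw [← integral_eq_zero_iff_of_nonneg_ae]
    · have : ∫ ω, -(s.indicator g ω) ∂μ = -∫ ω, s.indicator g ω ∂μ := integral_neg _
      rw [this, neg_eq_zero]
      have h1 : ∫ ω, s.indicator g ω ∂μ ≤ 0 :=
        integral_nonpos hnonpos
      have h2 : 0 ≤ ∫ ω, s.indicator g ω ∂μ := by rw [← hieq]; exact hipV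
      linarith
    · exact Eventually.of_forall fun ω => by simpa using hnonpos ω
    · exact hint2.neg
  -- hence s is null, so W ≥ 0 a.e.
  have hsnull : ∀ᵐ ω ∂μ, ω ∉ s := by
    filter_upwards [hzero] with ω h
    intro hω
    have : s.indicator g ω = 0 := by simpa [neg_eq_zero] using h
    rw [Set.indicator_of_mem hω] at this
    exact absurd this (ne_of_lt hω)
  rw [← AEEqFun.coeFn_le]
  filter_upwards [hWg, hsnull, (AEEqFun.coeFn_zero : ⇑(0 : Ω →ₘ[μ] ℝ) =ᵐ[μ] 0)] with ω h1 h2 h3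
  rw [h1, h3]
  simpa [s, not_lt] using h2

end Nonneg

section Pairing
variable {μ : Measure Ω} {d : ℕ}

lemma pairing_zero_right (X : Fin d → (Ω →ₘ[μ] ℝ)) : pairing X 0 = 0 := by
  unfold pairing
  refine Finset.sum_eq_zero fun i _ => ?_
  exact ip_zero_right (X i)

lemma pairing_add_left {X Y Z : Fin d → (Ω →ₘ[μ] ℝ)}
    (h1 : ∀ i, Integrable (fun ω => X i ω * Z i ω) μ)
    (h2 : ∀ i, Integrable (fun ω => Y i ω * Z i ω) μ) :
    pairing (X + Y) Z = pairing X Z + pairing Y Z := by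
  unfold pairing
  rw [← Finset.sum_add_distrib]
  exact Finset.sum_congr rfl fun i _ => ip_add_left (h1 i) (h2 i)

lemma pairing_smul_left (c : ℝ) (X Z : Fin d → (Ω →ₘ[μ] ℝ)) :
    pairing (c • X) Z = c * pairing X Z := by
  unfold pairing
  rw [Finset.mul_sum]
  exact Finset.sum_congr rfl fun i _ => ip_smul_left c (X i) (Z i)

lemma pairing_add_right {X Z₁ Z₂ : Fin d → (Ω →ₘ[μ] ℝ)}
    (h1 : ∀ i, Integrable (fun ω => X i ω * Z₁ i ω) μ)
    (h2 : ∀ i, Integrable (fun ω => X i ω * Z₂ i ω) μ) :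
    pairing X (Z₁ + Z₂) = pairing X Z₁ + pairing X Z₂ := by
  unfold pairing
  rw [← Finset.sum_add_distrib]
  exact Finset.sum_congr rfl fun i _ => ip_add_right (h1 i) (h2 i)

lemma pairing_smul_right (c : ℝ) (X Z : Fin d → (Ω →ₘ[μ] ℝ)) :
    pairing X (c • Z) = c * pairing X Z := by
  unfold pairing
  rw [Finset.mul_sum]
  exact Finset.sum_congr rfl fun i _ => ip_smul_right c (X i) (Z i)

end Pairing

section Key
variable {μ : Measure Ω} {d : ℕ}

/-- The product space as a submodule. -/
def XSub {Li : Fin d → Set (Ω →ₘ[μ] ℝ)} {nrmX : Fin d → ((Ω →ₘ[μ] ℝ) → ℝ)}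
    (hLi : ∀ i, IsAdmissible (Li i) (nrmX i)) : Submodule ℝ (Fin d → (Ω →ₘ[μ] ℝ)) :=
  setSub (prodSet Li) (fun i => (hLi i).zero_mem)
    (fun f hf g hg i => (hLi i).add_mem _ (hf i) _ (hg i))
    (fun c f hf i => (hLi i).smul_mem c _ (hf i))

/-- The dual product space as a submodule. -/
def DSub (Li : Fin d → Set (Ω →ₘ[μ] ℝ)) : Submodule ℝ (Fin d → (Ω →ₘ[μ] ℝ)) :=
  setSub (prodSet fun i => kdual (Li i)) (fun i => kdual_zero_mem _)
    (fun f hf g hg i => kdual_add_mem (hf i) (hg i))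
    (fun c f hf i => kdual_smul_mem c (hf i))

set_option maxHeartbeats 2000000 in
lemma key {Li : Fin d → Set (Ω →ₘ[μ] ℝ)} {nrmX : Fin d → ((Ω →ₘ[μ] ℝ) → ℝ)}
    {EE : Set (Ω →ₘ[μ] ℝ)} {nrmE : (Ω →ₘ[μ] ℝ) → ℝ}
    {S : (Fin d → (Ω →ₘ[μ] ℝ)) → (Ω →ₘ[μ] ℝ)} {A : Set (Ω →ₘ[μ] ℝ)}
    (hLi : ∀ i, IsAdmissible (Li i) (nrmX i)) (hE : IsAdmissible EE nrmE)
    (hS : IsAdmissibleImpact (prodSet Li) (prodSet fun i => kdual (Li i)) EE (kdual EE) S)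
    {X : Fin d → (Ω →ₘ[μ] ℝ)} (hX : X ∈ prodSet Li)
    {W : Ω →ₘ[μ] ℝ} (hWd : W ∈ kdual EE) (hW0 : (0 : Ω →ₘ[μ] ℝ) ≤ W) {u : ℝ}
    (hu1 : ip (S X) W < u) (hu2 : ∀ U ∈ A, u ≤ ip U W) :
    ∃ Z ∈ prodSet (fun i => kdual (Li i)),
      ((pairing X Z : ℝ) : EReal) < suppS A W +
        ⨅ Y ∈ prodSet Li, ((pairing Y Z - ∫ ω, S Y ω * W ω ∂μ : ℝ) : EReal) := by
  classical
  letI : AddCommGroup ↥(prodSet Li) := inferInstanceAs (AddCommGroup ↥(XSub hLi))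
  letI : Module ℝ ↥(prodSet Li) := inferInstanceAs (Module ℝ ↥(XSub hLi))
  letI : AddCommGroup ↥(prodSet fun i => kdual (Li i)) :=
    inferInstanceAs (AddCommGroup ↥(DSub Li))
  letI : Module ℝ ↥(prodSet fun i => kdual (Li i)) := inferInstanceAs (Module ℝ ↥(DSub Li))
  letI tX : TopologicalSpace ↥(prodSet Li) := wtop (prodSet Li) (prodSet fun i => kdual (Li i))
  -- the index family of linear functionals on the product with ℝ
  let p : (↥(prodSet fun i => kdual (Li i)) ⊕ Unit) →
      ((↥(prodSet Li) × ℝ) →ₗ[ℝ] ℝ) := fun i =>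
    Sum.rec (fun Z =>
      { toFun := fun v => pairing (v.1 : Fin d → (Ω →ₘ[μ] ℝ)) (Z : Fin d → (Ω →ₘ[μ] ℝ))
        map_add' := fun v w =>
          pairing_add_left (fun i => Z.2 i _ (v.1.2 i)) (fun i => Z.2 i _ (w.1.2 i))
        map_smul' := fun c v => by
          simp; exact pairing_smul_left c (v.1 : Fin d → (Ω →ₘ[μ] ℝ)) _ })
      (fun _ =>
      { toFun := fun v => v.2
        map_add' := fun v w => rfl
        map_smul' := fun c v => rfl }) i
  -- upper semicontinuity and the hypograph
  set φ : ↥(prodSet Li) → ℝ :=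
    fun Y => ∫ ω, S (Y : Fin d → (Ω →ₘ[μ] ℝ)) ω * W ω ∂μ with hφ
  have husc : UpperSemicontinuous φ := hS.usc W hWd hW0
  set H : Set (↥(prodSet Li) × ℝ) := {yt | yt.2 ≤ φ yt.1} with hH
  have hHcl : IsClosed H := by
    rw [← isOpen_compl_iff, isOpen_iff_mem_nhds]
    rintro ⟨Y, t⟩ hYt
    simp only [H, Set.mem_compl_iff, Set.mem_setOf_eq, not_le] at hYt
    have h1 : ∀ᶠ Y' in nhds Y, φ Y' < (φ Y + t)/2 := husc Y _ (by linarith)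
    have h2 : Set.Ioi ((φ Y + t)/2) ∈ nhds t := Ioi_mem_nhds (by linarith)
    refine Filter.mem_of_superset (prod_mem_nhds h1 h2) ?_
    rintro ⟨Y', t'⟩ ⟨hY', ht'⟩
    simp only [H, Set.mem_compl_iff, Set.mem_setOf_eq, not_le]
    exact lt_trans hY' ht'
  have hHconv : Convex ℝ H := by
    rintro ⟨Y₁, t₁⟩ h1 ⟨Y₂, t₂⟩ h2 a b ha hb hab
    simp only [H, Set.mem_setOf_eq] at h1 h2 ⊢
    have hb' : b = 1 - a := by linarith
    have ha1 : a ≤ 1 := by linarith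
    have hconc := hS.concave (Y₁ : Fin d → (Ω →ₘ[μ] ℝ)) Y₁.2 (Y₂ : Fin d → (Ω →ₘ[μ] ℝ))
      Y₂.2 a ha ha1
    have hcomb_mem : a • (Y₁ : Fin d → (Ω →ₘ[μ] ℝ)) + (1-a) • (Y₂ : Fin d → (Ω →ₘ[μ] ℝ))
        ∈ prodSet Li := fun i => (hLi i).add_mem _ ((hLi i).smul_mem a _ (Y₁.2 i)) _
      ((hLi i).smul_mem (1-a) _ (Y₂.2 i))
    have hS1 : S (Y₁ : Fin d → (Ω →ₘ[μ] ℝ)) ∈ EE := hS.mapsTo _ Y₁.2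
    have hS2 : S (Y₂ : Fin d → (Ω →ₘ[μ] ℝ)) ∈ EE := hS.mapsTo _ Y₂.2
    have hSc : S (a • (Y₁ : Fin d → (Ω →ₘ[μ] ℝ)) + (1-a) • (Y₂ : Fin d → (Ω →ₘ[μ] ℝ))) ∈ EE :=
      hS.mapsTo _ hcomb_mem
    have hlin : a • S (Y₁ : Fin d → (Ω →ₘ[μ] ℝ)) + (1-a) • S (Y₂ : Fin d → (Ω →ₘ[μ] ℝ)) ∈ EE :=
      hE.add_mem _ (hE.smul_mem a _ hS1) _ (hE.smul_mem (1-a) _ hS2)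
    have hmono := ip_mono_left hconc hW0 (hWd _ hlin) (hWd _ hSc)
    have hcombo := ip_combo_left (U := S (Y₁ : Fin d → (Ω →ₘ[μ] ℝ)))
      (V := S (Y₂ : Fin d → (Ω →ₘ[μ] ℝ))) (W := W) a (1-a) (hWd _ hS1) (hWd _ hS2)
    show a • t₁ + b • t₂ ≤ φ (a • (⟨Y₁.1, Y₁.2⟩:↥(prodSet Li)) + b • ⟨Y₂.1, Y₂.2⟩)
    have hφc : φ (a • (⟨Y₁.1, Y₁.2⟩:↥(prodSet Li)) + b • ⟨Y₂.1, Y₂.2⟩) =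
        ip (S (a • (Y₁ : Fin d → (Ω →ₘ[μ] ℝ)) + b • (Y₂ : Fin d → (Ω →ₘ[μ] ℝ)))) W := rfl
    rw [hφc, hb']
    have : a * φ ⟨Y₁.1, Y₁.2⟩ + (1-a) * φ ⟨Y₂.1, Y₂.2⟩ ≤
        ip (S (a • (Y₁ : Fin d → (Ω →ₘ[μ] ℝ)) + (1-a) • (Y₂ : Fin d → (Ω →ₘ[μ] ℝ)))) W := by
      rw [show (a : ℝ) * φ ⟨Y₁.1, Y₁.2⟩ + (1-a) * φ ⟨Y₂.1, Y₂.2⟩ =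
        a * ip (S (Y₁ : Fin d → (Ω →ₘ[μ] ℝ))) W + (1-a) * ip (S (Y₂ : Fin d → (Ω →ₘ[μ] ℝ))) W
        from rfl, ← hcombo]
      exact hmono
    refine le_trans ?_ this
    have ht1 : t₁ ≤ φ ⟨Y₁.1, Y₁.2⟩ := h1
    have ht2 : t₂ ≤ φ ⟨Y₂.1, Y₂.2⟩ := h2
    have := add_le_add (mul_le_mul_of_nonneg_left ht1 ha)
      (mul_le_mul_of_nonneg_left ht2 (by linarith : (0:ℝ) ≤ 1 - a))
    simpa [smul_eq_mul, hb'] using this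
  -- the separating point
  set c : ℝ := (ip (S X) W + u)/2 with hc
  have hφX : φ ⟨X, hX⟩ = ip (S X) W := rfl
  have hcu : c < u := by rw [hc]; linarith
  have hP : ((⟨X, hX⟩ : ↥(prodSet Li)), c) ∉ H := by
    simp only [H, Set.mem_setOf_eq, not_le, hφX]
    rw [hc]; linarith
  -- the weak topology on the product is finer than the induced topology of the family p
  have ht : TopologicalSpace.induced
      (fun (v : ↥(prodSet Li) × ℝ) (i : ↥(prodSet fun i => kdual (Li i)) ⊕ Unit) => p i v)
      Pi.topologicalSpace ≤ (instTopologicalSpaceProd :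
        TopologicalSpace (↥(prodSet Li) × ℝ)) := by
    have htgt : (instTopologicalSpaceProd : TopologicalSpace (↥(prodSet Li) × ℝ)) =
        TopologicalSpace.induced Prod.fst tX ⊓ TopologicalSpace.induced Prod.snd
          inferInstance := rfl
    rw [htgt]
    clear htgt
    letI τP : TopologicalSpace (↥(prodSet Li) × ℝ) :=
      TopologicalSpace.induced
        (fun (v : ↥(prodSet Li) × ℝ) (i : ↥(prodSet fun i => kdual (Li i)) ⊕ Unit) => p i v)
        Pi.topologicalSpace
    have hΦc : @Continuous _ _ τP _
        (fun (v : ↥(prodSet Li) × ℝ) (j : ↥(prodSet fun i => kdual (Li i)) ⊕ Unit) =>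
          p j v) := continuous_induced_dom
    have hpc : ∀ i, @Continuous _ _ τP _ (p i) :=
      fun i => (continuous_apply i).comp hΦc
    refine le_inf ?_ ?_
    · rw [show tX = TopologicalSpace.induced
        (fun (Y : ↥(prodSet Li)) (Z : ↥(prodSet fun i => kdual (Li i))) =>
          pairing (Y : Fin d → (Ω →ₘ[μ] ℝ)) (Z : Fin d → (Ω →ₘ[μ] ℝ)))
        Pi.topologicalSpace from rfl, induced_compose]
      have hcont : @Continuous _ _ τP _
          (fun (v : ↥(prodSet Li) × ℝ) (Z : ↥(prodSet fun i => kdual (Li i))) =>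
            pairing ((v.1 : Fin d → (Ω →ₘ[μ] ℝ))) (Z : Fin d → (Ω →ₘ[μ] ℝ))) :=
        continuous_pi fun Z => hpc (Sum.inl Z)
      exact continuous_iff_le_induced.mp hcont
    · exact continuous_iff_le_induced.mp (hpc (Sum.inr ()))
  obtain ⟨g, hg, r, hgx, hgy⟩ := weak_sep p hHconv _ ht hHcl hP
  -- identify g
  let Φ : (↥(prodSet fun i => kdual (Li i)) × ℝ) →ₗ[ℝ] ((↥(prodSet Li) × ℝ) →ₗ[ℝ] ℝ) :=
    { toFun := fun Zs =>
        { toFun := fun v => pairing (v.1 : Fin d → (Ω →ₘ[μ] ℝ))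
            (Zs.1 : Fin d → (Ω →ₘ[μ] ℝ)) + Zs.2 * v.2
          map_add' := fun v w => by
            show pairing ((v.1 : Fin d → (Ω →ₘ[μ] ℝ)) + (w.1 : Fin d → (Ω →ₘ[μ] ℝ)))
              (Zs.1 : Fin d → (Ω →ₘ[μ] ℝ)) + Zs.2 * (v.2 + w.2) = _
            rw [pairing_add_left (fun i => Zs.1.2 i _ (v.1.2 i))
              (fun i => Zs.1.2 i _ (w.1.2 i))]
            show _ = pairing _ _ + Zs.2 * v.2 + (pairing _ _ + Zs.2 * w.2)
            ring
          map_smul' := fun a v => by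
            show pairing (a • (v.1 : Fin d → (Ω →ₘ[μ] ℝ)))
              (Zs.1 : Fin d → (Ω →ₘ[μ] ℝ)) + Zs.2 * (a * v.2) = _
            rw [pairing_smul_left]
            show _ = a * (pairing _ _ + Zs.2 * v.2)
            ring }
      map_add' := fun Zs Zs' => by
        refine LinearMap.ext fun v => ?_
        show pairing (v.1 : Fin d → (Ω →ₘ[μ] ℝ))
          ((Zs.1 : Fin d → (Ω →ₘ[μ] ℝ)) + (Zs'.1 : Fin d → (Ω →ₘ[μ] ℝ))) +
          (Zs.2 + Zs'.2) * v.2 = _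
        rw [pairing_add_right (fun i => Zs.1.2 i _ (v.1.2 i))
          (fun i => Zs'.1.2 i _ (v.1.2 i))]
        show _ = pairing _ _ + Zs.2 * v.2 + (pairing _ _ + Zs'.2 * v.2)
        ring
      map_smul' := fun a Zs => by
        refine LinearMap.ext fun v => ?_
        show pairing (v.1 : Fin d → (Ω →ₘ[μ] ℝ))
          (a • (Zs.1 : Fin d → (Ω →ₘ[μ] ℝ))) + (a * Zs.2) * v.2 = _
        rw [pairing_smul_right]
        show _ = a * (pairing _ _ + Zs.2 * v.2)
        ring }
  have hrange : Submodule.span ℝ (Set.range p) ≤ LinearMap.range Φ := by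
    rw [Submodule.span_le]
    rintro _ ⟨i, rfl⟩
    cases i with
    | inl Z =>
      refine ⟨(Z, 0), ?_⟩
      refine LinearMap.ext fun v => ?_
      show pairing _ _ + 0 * v.2 = pairing _ _
      ring
    | inr _ =>
      refine ⟨(0, 1), ?_⟩
      refine LinearMap.ext fun v => ?_
      show pairing (v.1 : Fin d → (Ω →ₘ[μ] ℝ))
        ((0 : ↥(prodSet fun i => kdual (Li i))) : Fin d → (Ω →ₘ[μ] ℝ)) + 1 * v.2 = v.2
      rw [show ((0 : ↥(prodSet fun i => kdual (Li i))) : Fin d → (Ω →ₘ[μ] ℝ)) = 0 from rfl,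
        pairing_zero_right]
      ring
  obtain ⟨⟨Z, s⟩, hZs⟩ := hrange hg
  have hgP : pairing X (Z : Fin d → (Ω →ₘ[μ] ℝ)) + s * c < r := by
    have : g ((⟨X, hX⟩ : ↥(prodSet Li)), c) =
        pairing X (Z : Fin d → (Ω →ₘ[μ] ℝ)) + s * c := by rw [← hZs]; rfl
    rwa [this] at hgx
  have hgH : ∀ Y : ↥(prodSet Li), ∀ t : ℝ, t ≤ φ Y →
      r < pairing (Y : Fin d → (Ω →ₘ[μ] ℝ)) (Z : Fin d → (Ω →ₘ[μ] ℝ)) + s * t := by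
    intro Y t hYt
    have hmem : (Y, t) ∈ H := hYt
    have := hgy (Y, t) hmem
    rwa [show g (Y, t) = pairing (Y : Fin d → (Ω →ₘ[μ] ℝ))
      (Z : Fin d → (Ω →ₘ[μ] ℝ)) + s * t by rw [← hZs]; rfl] at this
  -- the slope s is negative
  have hs_nonpos : s ≤ 0 := by
    by_contra hpos
    push_neg at hpos
    set t0 : ℝ := min (φ ⟨X, hX⟩) ((r - pairing X (Z : Fin d → (Ω →ₘ[μ] ℝ)) - 1)/s) with ht0
    have h := hgH ⟨X, hX⟩ t0 (min_le_left _ _)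
    have hst : s * t0 ≤ r - pairing X (Z : Fin d → (Ω →ₘ[μ] ℝ)) - 1 := by
      have h1 : t0 ≤ (r - pairing X (Z : Fin d → (Ω →ₘ[μ] ℝ)) - 1)/s := min_le_right _ _
      have h2 := mul_le_mul_of_nonneg_left h1 hpos.le
      rwa [mul_div_cancel₀ _ (ne_of_gt hpos)] at h2
    have : r < pairing X (Z : Fin d → (Ω →ₘ[μ] ℝ)) + s * t0 := h
    linarith
  have hs_ne : s ≠ 0 := by
    intro h0
    have h1 := hgH ⟨X, hX⟩ (φ ⟨X, hX⟩) le_rfl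
    rw [h0] at h1 hgP
    simp only [zero_mul, add_zero] at h1 hgP
    linarith
  have hs : s < 0 := lt_of_le_of_ne hs_nonpos hs_ne
  set σ : ℝ := -s with hσdef
  have hσ : 0 < σ := by rw [hσdef]; linarith
  -- the dual element
  set Zstar : ↥(prodSet fun i => kdual (Li i)) := σ⁻¹ • Z with hZstar
  have hZco : (Zstar : Fin d → (Ω →ₘ[μ] ℝ)) = σ⁻¹ • (Z : Fin d → (Ω →ₘ[μ] ℝ)) := rfl
  refine ⟨(Zstar : Fin d → (Ω →ₘ[μ] ℝ)), Zstar.2, ?_⟩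
  -- lower bound for the infimum
  have hA1 : ∀ Y ∈ prodSet Li, σ⁻¹ * r ≤
      pairing Y (Zstar : Fin d → (Ω →ₘ[μ] ℝ)) - ∫ ω, S Y ω * W ω ∂μ := by
    intro Y hY
    have h := hgH ⟨Y, hY⟩ (φ ⟨Y, hY⟩) le_rfl
    have hφY : φ ⟨Y, hY⟩ = ∫ ω, S Y ω * W ω ∂μ := rfl
    have h' : r ≤ pairing Y (Z : Fin d → (Ω →ₘ[μ] ℝ)) - σ * (∫ ω, S Y ω * W ω ∂μ) := by
      rw [hφY] at h
      rw [hσdef]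
      linarith
    have h2 := mul_le_mul_of_nonneg_left h' (inv_nonneg.mpr hσ.le)
    rw [mul_sub, ← mul_assoc, inv_mul_cancel₀ (ne_of_gt hσ), one_mul] at h2
    rw [hZco, pairing_smul_right]
    linarith
  have hB1 : pairing X (Zstar : Fin d → (Ω →ₘ[μ] ℝ)) - c < σ⁻¹ * r := by
    have h' : pairing X (Z : Fin d → (Ω →ₘ[μ] ℝ)) - σ * c < r := by
      rw [hσdef]; linarith
    have h2 := mul_lt_mul_of_pos_left h' (inv_pos.mpr hσ)
    rw [mul_sub, ← mul_assoc, inv_mul_cancel₀ (ne_of_gt hσ), one_mul] at h2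
    rw [hZco, pairing_smul_right]
    linarith
  -- conclude in EReal
  have hiInf : ((σ⁻¹ * r : ℝ) : EReal) ≤
      ⨅ Y ∈ prodSet Li, ((pairing Y (Zstar : Fin d → (Ω →ₘ[μ] ℝ)) -
        ∫ ω, S Y ω * W ω ∂μ : ℝ) : EReal) :=
    le_iInf₂ fun Y hY => EReal.coe_le_coe_iff.2 (hA1 Y hY)
  have hsupp : ((u : ℝ) : EReal) ≤ suppS A W :=
    le_iInf₂ fun U hU => EReal.coe_le_coe_iff.2 (hu2 U hU)
  calc ((pairing X (Zstar : Fin d → (Ω →ₘ[μ] ℝ)) : ℝ) : EReal)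
      < ((u + σ⁻¹ * r : ℝ) : EReal) := by
        rw [EReal.coe_lt_coe_iff]
        linarith
    _ = ((u : ℝ) : EReal) + ((σ⁻¹ * r : ℝ) : EReal) := EReal.coe_add _ _
    _ ≤ suppS A W + ⨅ Y ∈ prodSet Li, ((pairing Y (Zstar : Fin d → (Ω →ₘ[μ] ℝ)) -
        ∫ ω, S Y ω * W ω ∂μ : ℝ) : EReal) := add_le_add hsupp hiInf

end Key

section Final
variable {μ : Measure Ω} {d : ℕ}

lemma penalty_le {Li : Fin d → Set (Ω →ₘ[μ] ℝ)}
    {S : (Fin d → (Ω →ₘ[μ] ℝ)) → (Ω →ₘ[μ] ℝ)} {A : Set (Ω →ₘ[μ] ℝ)}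
    (K : Set (Ω →ₘ[μ] ℝ)) {X : Fin d → (Ω →ₘ[μ] ℝ)} (hX : X ∈ prodSet Li) (hSA : S X ∈ A)
    (Z : Fin d → (Ω →ₘ[μ] ℝ)) :
    penalty (prodSet Li) A S K Z ≤ ((pairing X Z : ℝ) : EReal) := by
  refine iSup₂_le fun W hW => ?_
  have h1 : suppS A W ≤ ((ip (S X) W : ℝ) : EReal) := iInf₂_le _ hSA
  have h2 : (⨅ Y ∈ prodSet Li, ((pairing Y Z - ∫ ω, S Y ω * W ω ∂μ : ℝ) : EReal)) ≤
      ((pairing X Z - ip (S X) W : ℝ) : EReal) := iInf₂_le _ hX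
  calc suppS A W + ⨅ Y ∈ prodSet Li, ((pairing Y Z - ∫ ω, S Y ω * W ω ∂μ : ℝ) : EReal)
      ≤ ((ip (S X) W : ℝ) : EReal) + ((pairing X Z - ip (S X) W : ℝ) : EReal) :=
        add_le_add h1 h2
    _ = ((pairing X Z : ℝ) : EReal) := by
        rw [← EReal.coe_add]
        norm_num

lemma dual_rep {Li : Fin d → Set (Ω →ₘ[μ] ℝ)} {nrmX : Fin d → ((Ω →ₘ[μ] ℝ) → ℝ)}
    {EE : Set (Ω →ₘ[μ] ℝ)} {nrmE : (Ω →ₘ[μ] ℝ) → ℝ}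
    {S : (Fin d → (Ω →ₘ[μ] ℝ)) → (Ω →ₘ[μ] ℝ)} {A : Set (Ω →ₘ[μ] ℝ)}
    (hLi : ∀ i, IsAdmissible (Li i) (nrmX i)) (hE : IsAdmissible EE nrmE)
    (hS : IsAdmissibleImpact (prodSet Li) (prodSet fun i => kdual (Li i)) EE (kdual EE) S)
    (K : Set (Ω →ₘ[μ] ℝ))
    (hgood : ∀ X ∈ prodSet Li, S X ∉ A →
      ∃ W u, W ∈ K ∧ W ∈ kdual EE ∧ (0 : Ω →ₘ[μ] ℝ) ≤ W ∧ ip (S X) W < u ∧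
        ∀ U ∈ A, u ≤ ip U W) :
    sysAcc (prodSet Li) S A =
      ⋂ Z ∈ prodSet fun i => kdual (Li i),
        {X ∈ prodSet Li | penalty (prodSet Li) A S K Z ≤ ((pairing X Z : ℝ) : EReal)} := by
  apply Set.Subset.antisymm
  · rintro X ⟨hX, hSA⟩
    exact Set.mem_iInter₂.2 fun Z hZ => ⟨hX, penalty_le K hX hSA Z⟩
  · intro X hX
    rw [Set.mem_iInter₂] at hX
    have hXX : X ∈ prodSet Li := (hX 0 (fun i => kdual_zero_mem (Li i))).1
    refine ⟨hXX, ?_⟩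
    by_contra hSA
    obtain ⟨W, u, hWK, hWd, hW0, hu1, hu2⟩ := hgood X hXX hSA
    obtain ⟨Z, hZ, hlt⟩ := key hLi hE hS hXX hWd hW0 hu1 hu2
    have hle := (hX Z hZ).2
    have hterm : suppS A W +
        (⨅ Y ∈ prodSet Li, ((pairing Y Z - ∫ ω, S Y ω * W ω ∂μ : ℝ) : EReal)) ≤
        penalty (prodSet Li) A S K Z :=
      le_iSup₂ (f := fun W (_ : W ∈ K) => suppS A W +
        ⨅ Y ∈ prodSet Li, ((pairing Y Z - ∫ ω, S Y ω * W ω ∂μ : ℝ) : EReal)) W hWK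
    exact absurd (le_trans hterm hle) (not_le.2 hlt)

end Final

/-- dual representation of the systemic acceptance set via `α` and `α⁺`. -/
theorem statement7 {μ : Measure Ω} [IsProbabilityMeasure μ] {d : ℕ}
    (Li : Fin d → Set (Ω →ₘ[μ] ℝ)) (nrmX : Fin d → ((Ω →ₘ[μ] ℝ) → ℝ))
    (EE : Set (Ω →ₘ[μ] ℝ)) (nrmE : (Ω →ₘ[μ] ℝ) → ℝ)
    (S : (Fin d → (Ω →ₘ[μ] ℝ)) → (Ω →ₘ[μ] ℝ)) (A : Set (Ω →ₘ[μ] ℝ))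
    (hLi : ∀ i, IsAdmissible (Li i) (nrmX i))
    (hE : IsAdmissible EE nrmE)
    (hS : IsAdmissibleImpact (prodSet Li) (prodSet fun i => kdual (Li i)) EE (kdual EE) S)
    (hA : IsAdmissibleAcceptance (prodSet Li) EE (kdual EE) S A) :
    (sysAcc (prodSet Li) S A =
      ⋂ Z ∈ prodSet fun i => kdual (Li i),
        {X ∈ prodSet Li | alpha (prodSet Li) (kdual EE) A S Z ≤ ((pairing X Z : ℝ) : EReal)}) ∧
    ((barrS A (kdual EE) ∩ strictPos μ).Nonempty →
      sysAcc (prodSet Li) S A =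
        ⋂ Z ∈ prodSet fun i => kdual (Li i),
          {X ∈ prodSet Li |
            alphaPlus (prodSet Li) (kdual EE) A S Z ≤ ((pairing X Z : ℝ) : EReal)}) := by
  constructor
  · refine dual_rep hLi hE hS (barrS A (kdual EE)) ?_
    intro X hXX hSA
    obtain ⟨W, hWd, u, hu1, hu2⟩ := sepE hE hA.subset hA.convex hA.closed (hS.mapsTo X hXX) hSA
    have hu2' : ∀ U ∈ A, u ≤ ip U W := fun U hU => (hu2 U hU).le
    have hW0 : (0 : Ω →ₘ[μ] ℝ) ≤ W := W_nonneg hE hA.zero_mem hA.mono hWd hu2'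
    have hbot : (⊥ : EReal) < suppS A W :=
      lt_of_lt_of_le (EReal.bot_lt_coe u) (le_iInf₂ fun U hU => EReal.coe_le_coe_iff.2 (hu2' U hU))
    exact ⟨W, u, ⟨hWd, hbot⟩, hWd, hW0, hu1, hu2'⟩
  · rintro ⟨W₀, hW₀barr, hW₀pos⟩
    refine dual_rep hLi hE hS _ ?_
    intro X hXX hSA
    obtain ⟨W, hWd, u, hu1, hu2⟩ := sepE hE hA.subset hA.convex hA.closed (hS.mapsTo X hXX) hSA
    have hu2' : ∀ U ∈ A, u ≤ ip U W := fun U hU => (hu2 U hU).le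
    have hW0 : (0 : Ω →ₘ[μ] ℝ) ≤ W := W_nonneg hE hA.zero_mem hA.mono hWd hu2'
    obtain ⟨hW₀d, hW₀bot⟩ := hW₀barr
    -- the support functional value of W₀ is a real number
    have hW₀top : suppS A W₀ ≠ ⊤ := by
      refine ne_top_of_le_ne_top (EReal.coe_ne_top (ip (0 : Ω →ₘ[μ] ℝ) W₀)) ?_
      exact iInf₂_le _ hA.zero_mem
    set σ₀ : ℝ := (suppS A W₀).toReal with hσ₀def
    have hσ₀ : (σ₀ : EReal) = suppS A W₀ := EReal.coe_toReal hW₀top (ne_of_gt hW₀bot)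
    have hσ₀le : ∀ U ∈ A, σ₀ ≤ ip U W₀ := by
      intro U hU
      have : (σ₀ : EReal) ≤ ((ip U W₀ : ℝ) : EReal) := by
        rw [hσ₀]; exact iInf₂_le _ hU
      exact EReal.coe_le_coe_iff.1 this
    -- the perturbation parameter
    set a : ℝ := ip (S X) W with hadef
    set e : ℝ := ip (S X) W₀ with hedef
    set g : ℝ := u - a with hgdef
    have hg : 0 < g := by rw [hgdef]; linarith
    set M : ℝ := |e - σ₀| + 1 with hMdef
    have hM : 0 < M := by positivity
    set lam : ℝ := g / (2 * (g + M)) with hlamdef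
    have hgM : 0 < 2 * (g + M) := by positivity
    have hlam_pos : 0 < lam := div_pos hg hgM
    have hlam_id : lam * (2 * (g + M)) = g := div_mul_cancel₀ _ (ne_of_gt hgM)
    have hlam_half : lam ≤ 1/2 := by
      rw [hlamdef, div_le_iff₀ hgM]
      nlinarith
    -- the perturbed dual element
    set W' : Ω →ₘ[μ] ℝ := (1 - lam) • W + lam • W₀ with hW'def
    have hW'd : W' ∈ kdual EE := kdual_add_mem (kdual_smul_mem _ hWd) (kdual_smul_mem _ hW₀d)
    have hSXE : S X ∈ EE := hS.mapsTo X hXX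
    have hW'a : ip (S X) W' = (1 - lam) * a + lam * e :=
      ip_combo_right (1 - lam) lam (hWd _ hSXE) (hW₀d _ hSXE)
    set u' : ℝ := (1 - lam) * u + lam * σ₀ with hu'def
    have hu1' : ip (S X) W' < u' := by
      rw [hW'a, hu'def]
      have hem : e - σ₀ ≤ M - 1 := by
        rw [hMdef]; have := le_abs_self (e - σ₀); linarith
      have hP1 : lam * (e - σ₀) ≤ lam * (M - 1) :=
        mul_le_mul_of_nonneg_left hem hlam_pos.le
      nlinarith [hlam_id, hP1, hlam_pos, hg]
    have hu2'' : ∀ U ∈ A, u' ≤ ip U W' := by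
      intro U hU
      have hUE : U ∈ EE := hA.subset hU
      rw [show ip U W' = (1 - lam) * ip U W + lam * ip U W₀ from
        ip_combo_right (1 - lam) lam (hWd _ hUE) (hW₀d _ hUE), hu'def]
      have h1 : (1 - lam) * u ≤ (1 - lam) * ip U W :=
        mul_le_mul_of_nonneg_left (hu2' U hU) (by linarith)
      have h2 : lam * σ₀ ≤ lam * ip U W₀ :=
        mul_le_mul_of_nonneg_left (hσ₀le U hU) hlam_pos.le
      linarith
    -- strict positivity of W'
    have hW'pos : W' ∈ strictPos μ := by
      show ∀ᵐ ω ∂μ, 0 < W' ω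
      have h1 : ⇑W' =ᵐ[μ] ⇑((1 - lam) • W) + ⇑(lam • W₀) := AEEqFun.coeFn_add _ _
      have h2 : ⇑((1 - lam) • W) =ᵐ[μ] (1 - lam) • ⇑W := AEEqFun.coeFn_smul _ _
      have h3 : ⇑(lam • W₀) =ᵐ[μ] lam • ⇑W₀ := AEEqFun.coeFn_smul _ _
      have h4 : ⇑(0 : Ω →ₘ[μ] ℝ) ≤ᵐ[μ] ⇑W := AEEqFun.coeFn_le.2 hW0
      have h5 : ⇑(0 : Ω →ₘ[μ] ℝ) =ᵐ[μ] 0 := AEEqFun.coeFn_zero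
      filter_upwards [h1, h2, h3, h4, h5, hW₀pos] with ω e1 e2 e3 e4 e5 e6
      rw [e1]
      simp only [Pi.add_apply, e2, e3, Pi.smul_apply, smul_eq_mul]
      have hWω : 0 ≤ W ω := by rw [e5] at e4; exact e4
      have : 0 < lam * W₀ ω := mul_pos hlam_pos e6
      nlinarith
    have hbot' : (⊥ : EReal) < suppS A W' :=
      lt_of_lt_of_le (EReal.bot_lt_coe u') (le_iInf₂ fun U hU => EReal.coe_le_coe_iff.2 (hu2'' U hU))
    have hW'0 : (0 : Ω →ₘ[μ] ℝ) ≤ W' := by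
      rw [← AEEqFun.coeFn_le]
      have h5 : ⇑(0 : Ω →ₘ[μ] ℝ) =ᵐ[μ] 0 := AEEqFun.coeFn_zero
      filter_upwards [hW'pos, h5] with ω e1 e2
      rw [e2]; exact e1.le
    exact ⟨W', u', ⟨⟨hW'd, hbot'⟩, Or.inl hW'pos⟩, hW'd, hW'0, hu1', hu2''⟩


end SystemicRisk
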